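/- Let A ≥ B ≥ 1 be reals and define f(y,z) = (A·y + B·(z−y)) / ((A−1)·y + (B−1)·(z−y) + 1) on the domain {(y,z) ∈ [0,1]² : y ≤ z}. Then all three second partial derivatives ∂²f/∂y², ∂²f/∂y∂z, ∂²f/∂z² are nonpositive on this domain. -/

import Mathlib

private lemma hd1 (a b c d y : ℝ) (h : c * y + d ≠ 0) :
    HasDerivAt (fun x => (a * x + b) / (c * x + d))
      ((a * d - b * c) / (c * y + d) ^ 2) y := by
  have h1 : HasDerivAt (fun x : ℝ => a * x + b) a y := by
    simpa using ((hasDerivAt_id y).const_mul a).add_const b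
  have h2 : HasDerivAt (fun x : ℝ => c * x + d) c y := by
    simpa using ((hasDerivAt_id y).const_mul c).add_const d
  have := h1.fun_div h2 h
  refine this.congr_deriv ?_
  field_simp
  ring

private lemma hd2 (a b c d y : ℝ) (h : c * y + d ≠ 0) :
    HasDerivAt (fun x => (a * x + b) / (c * x + d) ^ 2)
      ((a * (c * y + d) - (a * y + b) * (2 * c)) / (c * y + d) ^ 3) y := by
  have h1 : HasDerivAt (fun x : ℝ => a * x + b) a y := by
    simpa using ((hasDerivAt_id y).const_mul a).add_const b
  have h2 : HasDerivAt (fun x : ℝ => c * x + d) c y := by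
    simpa using ((hasDerivAt_id y).const_mul c).add_const d
  have h2' : HasDerivAt (fun x : ℝ => (c * x + d) ^ 2) (2 * (c * y + d) * c) y := by
    have := h2.pow 2
    simpa [Pi.pow_def] using this
  have := h1.fun_div h2' (pow_ne_zero 2 h)
  refine this.congr_deriv ?_
  field_simp

private lemma hd2' (k c d y : ℝ) (h : c * y + d ≠ 0) :
    HasDerivAt (fun x => k / (c * x + d) ^ 2)
      (-(k * (2 * c)) / (c * y + d) ^ 3) y := by
  have := hd2 0 k c d y h
  simp only [zero_mul, zero_add] at this
  convert this using 1
  ring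

theorem f_dr_submodular_case_AB_ge_one
    (A B : ℝ) (hAB : B ≤ A) (hB : 1 ≤ B)
    (f : ℝ → ℝ → ℝ)
    (hf : ∀ y z, f y z =
      (A * y + B * (z - y)) / ((A - 1) * y + (B - 1) * (z - y) + 1)) :
    ∀ y z : ℝ, 0 ≤ y → y ≤ z → z ≤ 1 →
      deriv (fun y' => deriv (fun y'' => f y'' z) y') y ≤ 0 ∧
      deriv (fun z' => deriv (fun y' => f y' z') y) z ≤ 0 ∧
      deriv (fun z' => deriv (fun z'' => f y z'') z') z ≤ 0 := by
  intro y z hy hyz hz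
  have hz0 : 0 ≤ z := le_trans hy hyz
  have hDy : 0 < (A - B) * y + ((B - 1) * z + 1) := by nlinarith
  have hDz : 0 < (B - 1) * z + ((A - B) * y + 1) := by nlinarith
  refine ⟨?_, ?_, ?_⟩
  · -- ∂²/∂y²
    have hcont : ContinuousAt (fun y' => (A - B) * y' + ((B - 1) * z + 1)) y := by fun_prop
    have hev : ∀ᶠ y' in nhds y, (A - B) * y' + ((B - 1) * z + 1) ≠ 0 :=
      hcont.eventually_ne hDy.ne'
    have heq : (fun y' => deriv (fun y'' => f y'' z) y') =ᶠ[nhds y]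
        (fun y' => ((A - B) * ((B - 1) * z + 1) - B * z * (A - B)) /
          ((A - B) * y' + ((B - 1) * z + 1)) ^ 2) := by
      filter_upwards [hev] with y' hne
      have hfun : (fun y'' => f y'' z) =
          fun x => ((A - B) * x + B * z) / ((A - B) * x + ((B - 1) * z + 1)) := by
        funext x; rw [hf]; ring
      rw [hfun, (hd1 _ _ _ _ _ hne).deriv]
    rw [heq.deriv_eq,
      (hd2' ((A - B) * ((B - 1) * z + 1) - B * z * (A - B)) (A - B)
        ((B - 1) * z + 1) y hDy.ne').deriv]
    apply div_nonpos_of_nonpos_of_nonneg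
    · nlinarith [sq_nonneg (A - B), mul_nonneg (mul_nonneg (sub_nonneg.2 hAB) (sub_nonneg.2 hAB)) (sub_nonneg.2 hz)]
    · exact (pow_pos hDy 3).le
  · -- ∂²/∂y∂z
    have hcont : ContinuousAt (fun z' => (B - 1) * z' + ((A - B) * y + 1)) z := by fun_prop
    have hev : ∀ᶠ z' in nhds z, (B - 1) * z' + ((A - B) * y + 1) ≠ 0 :=
      hcont.eventually_ne hDz.ne'
    have heq : (fun z' => deriv (fun y' => f y' z') y) =ᶠ[nhds z]
        (fun z' => (-(A - B) * z' + (A - B)) /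
          ((B - 1) * z' + ((A - B) * y + 1)) ^ 2) := by
      filter_upwards [hev] with z' hne
      have hne' : (A - B) * y + ((B - 1) * z' + 1) ≠ 0 := by
        rw [show (A - B) * y + ((B - 1) * z' + 1) = (B - 1) * z' + ((A - B) * y + 1) from by ring]
        exact hne
      have hfun : (fun y' => f y' z') =
          fun x => ((A - B) * x + B * z') / ((A - B) * x + ((B - 1) * z' + 1)) := by
        funext x; rw [hf]; ring
      rw [hfun, (hd1 _ _ _ _ _ hne').deriv]
      rw [show (A - B) * y + ((B - 1) * z' + 1) = (B - 1) * z' + ((A - B) * y + 1) from by ring]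
      congr 1
      ring
    rw [heq.deriv_eq,
      (hd2 (-(A - B)) (A - B) (B - 1) ((A - B) * y + 1) z hDz.ne').deriv]
    apply div_nonpos_of_nonpos_of_nonneg
    · nlinarith [mul_nonneg (sub_nonneg.2 hAB) hDz.le,
        mul_nonneg (mul_nonneg (sub_nonneg.2 hAB) (sub_nonneg.2 hz)) (sub_nonneg.2 hB)]
    · exact (pow_pos hDz 3).le
  · -- ∂²/∂z²
    have hcont : ContinuousAt (fun z' => (B - 1) * z' + ((A - B) * y + 1)) z := by fun_prop
    have hev : ∀ᶠ z' in nhds z, (B - 1) * z' + ((A - B) * y + 1) ≠ 0 :=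
      hcont.eventually_ne hDz.ne'
    have heq : (fun z' => deriv (fun z'' => f y z'') z') =ᶠ[nhds z]
        (fun z' => (B * ((A - B) * y + 1) - (A - B) * y * (B - 1)) /
          ((B - 1) * z' + ((A - B) * y + 1)) ^ 2) := by
      filter_upwards [hev] with z' hne
      have hfun : (fun z'' => f y z'') =
          fun x => (B * x + (A - B) * y) / ((B - 1) * x + ((A - B) * y + 1)) := by
        funext x; rw [hf]; ring
      rw [hfun, (hd1 _ _ _ _ _ hne).deriv]
    rw [heq.deriv_eq,
      (hd2' (B * ((A - B) * y + 1) - (A - B) * y * (B - 1)) (B - 1)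
        ((A - B) * y + 1) z hDz.ne').deriv]
    apply div_nonpos_of_nonpos_of_nonneg
    · nlinarith [mul_nonneg (mul_nonneg (sub_nonneg.2 hAB) hy) (sub_nonneg.2 hB)]
    · exact (pow_pos hDz 3).le
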